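/- If ε₁ > ε_{P,Q} (the pivotal value), then every h ∈ H satisfies E_P(h; H_Q(ε₁)) = E_P(h), i.e., inf_{h' ∈ H_Q(ε₁)} R_P(h') = inf_{h' ∈ H} R_P(h'). -/
import Mathlib


noncomputable def excess {H : Type*} (R : H → ℝ) (h : H) : ℝ :=
  R h - sInf (Set.range R)

/-- Excess risk w.r.t. a subclass `H₀ ⊆ H`. -/
noncomputable def excessOn {H : Type*} (R : H → ℝ) (S : Set H) (h : H) : ℝ :=
  R h - sInf (R '' S)

def cset {H : Type*} (R : H → ℝ) (ε : ℝ) : Set H :=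
  {h | excess R h ≤ ε}

noncomputable def pivot {H : Type*} (RP RQ : H → ℝ) : EReal :=
  ⨆ (ε : ℝ) (_ : 0 < ε), sInf ((fun h => (excess RQ h : EReal)) '' cset RP ε)

/-- if `ε₁ > ε_{P,Q}` then for every `h`,
`E_P(h; H_Q(ε₁)) = E_P(h)`, i.e. `inf_{h' ∈ H_Q(ε₁)} R_P(h') = inf_{h' ∈ H} R_P(h')`. -/
theorem excessOn_eq_excess_of_pivot_lt {H : Type*} [Nonempty H] (RP RQ : H → ℝ)
    (hRP : ∀ h, 0 ≤ RP h) (hRQ : ∀ h, 0 ≤ RQ h)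
    (ε₁ : ℝ) (hε₁ : pivot RP RQ < (ε₁ : EReal)) :
    (∀ h, excessOn RP (cset RQ ε₁) h = excess RP h) ∧
      sInf (RP '' cset RQ ε₁) = sInf (Set.range RP) := by
  have hbddR : BddBelow (Set.range RP) := ⟨0, by rintro _ ⟨h, rfl⟩; exact hRP h⟩
  have hneR : (Set.range RP).Nonempty := Set.range_nonempty RP
  -- For every ε > 0 there is h with excess RP h ≤ ε and excess RQ h < ε₁.
  have key : ∀ ε : ℝ, 0 < ε → ∃ h : H, excess RP h ≤ ε ∧ excess RQ h < ε₁ := by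
    intro ε hε
    have h1 : sInf ((fun h => (excess RQ h : EReal)) '' cset RP ε) < (ε₁ : EReal) := by
      refine lt_of_le_of_lt ?_ hε₁
      exact le_iSup₂ (f := fun (ε : ℝ) (_ : 0 < ε) =>
        sInf ((fun h => (excess RQ h : EReal)) '' cset RP ε)) ε hε
    obtain ⟨x, hx, hxlt⟩ := sInf_lt_iff.mp h1
    obtain ⟨h, hh, rfl⟩ := hx
    exact ⟨h, hh, by simpa using hxlt⟩
  have hsub : RP '' cset RQ ε₁ ⊆ Set.range RP := by
    rintro _ ⟨h, _, rfl⟩; exact ⟨h, rfl⟩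
  have hbddS : BddBelow (RP '' cset RQ ε₁) := hbddR.mono hsub
  obtain ⟨h₀, _, h₀Q⟩ := key 1 one_pos
  have hneS : (RP '' cset RQ ε₁).Nonempty := ⟨RP h₀, h₀, le_of_lt h₀Q, rfl⟩
  have hmain : sInf (RP '' cset RQ ε₁) = sInf (Set.range RP) := by
    refine le_antisymm ?_ (csInf_le_csInf hbddR hneS hsub)
    refine le_of_forall_pos_le_add fun ε hε => ?_
    obtain ⟨h, hP, hQ⟩ := key ε hε
    have : sInf (RP '' cset RQ ε₁) ≤ RP h :=
      csInf_le hbddS ⟨h, le_of_lt hQ, rfl⟩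
    have hP' : RP h - sInf (Set.range RP) ≤ ε := hP
    linarith
  exact ⟨fun h => by simp [excessOn, excess, hmain], hmain⟩
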